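/- Let q be an odd prime power, s an odd divisor of q+1, h ≤ s-1 a positive integer, l = (q²-1)/s, g a primitive element of F_{q²}, and δ = g^s. Suppose u_0,...,u_{h-1} ∈ F_q^* satisfy Σ_{k=0}^{h-1} g^{k(μl-q-1)} u_k = 0 for all ⌈(s-h)/2⌉+1 ≤ μ ≤ ⌊(s+h)/2⌋-1, and let v_k ∈ F_{q²}^* with v_k^{q+1} = u_k. Define vectors a₁, v₁ ∈ F_{q²}^{lh} with coordinates indexed by (k,ν), 0 ≤ k ≤ h-1, 0 ≤ ν ≤ l-1, given by a₁ = g^k δ^ν and v₁ = v_k δ^ν. Then Σ_{k,ν} (g^k δ^ν)^{qi+j} (v_k δ^ν)^{q+1} = 0 in F_{q²} for all 0 ≤ i, j ≤ ⌊(s+h)/2⌋·((q+1)/s) - 3. -/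

import Mathlib

theorem stmt_19 (q s h : ℕ) (hq : IsPrimePow q) (hqodd : Odd q)
    (hsodd : Odd s) (hsdvd : s ∣ q + 1)
    (hh : 1 ≤ h) (hhs : h ≤ s - 1)
    (F : Type*) [Field F] [Fintype F] (hF : Fintype.card F = q ^ 2)
    (g : Fˣ) (hg : orderOf g = q ^ 2 - 1)
    (u v : ℕ → F)
    (hu : ∀ k < h, u k ≠ 0 ∧ (u k) ^ q = u k)
    (humu : ∀ μ : ℕ, (s - h + 1) / 2 + 1 ≤ μ → μ ≤ (s + h) / 2 - 1 →
      ∑ k ∈ Finset.range h,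
        ((g ^ ((k : ℤ) * ((μ : ℤ) * (((q ^ 2 - 1) / s : ℕ) : ℤ) - q - 1)) : Fˣ) : F) * u k = 0)
    (hv : ∀ k < h, (v k) ^ (q + 1) = u k)
    (i j : ℕ) (hi : i ≤ (s + h) / 2 * ((q + 1) / s) - 3)
    (hj : j ≤ (s + h) / 2 * ((q + 1) / s) - 3) :
    ∑ k ∈ Finset.range h, ∑ ν ∈ Finset.range ((q ^ 2 - 1) / s),
      ((g : F) ^ k * ((g : F) ^ s) ^ ν) ^ (q * i + j)
        * (v k * ((g : F) ^ s) ^ ν) ^ (q + 1) = 0 := by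
  -- basic numerics
  obtain ⟨m, hm⟩ := hsdvd
  have hq2 : 2 ≤ q := hq.two_le
  have hs3 : 3 ≤ s := by
    rcases hsodd with ⟨t, ht⟩; omega
  have hmeven : m % 2 = 0 := by
    have heven : Even (s * m) := hm ▸ hqodd.add_one
    have := (Nat.even_mul.mp heven).resolve_left (by simpa [Nat.not_even_iff_odd] using hsodd)
    exact Nat.even_iff.mp this
  have hm0 : m ≠ 0 := by rintro rfl; rw [Nat.mul_zero] at hm; omega
  have hm2 : 2 ≤ m := by omega
  have hq5 : 5 ≤ q := by
    have h6 : 3 * 2 ≤ s * m := Nat.mul_le_mul hs3 hm2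
    omega
  have hq21 : q ^ 2 - 1 = (q + 1) * (q - 1) := by
    have := Nat.sq_sub_sq q 1
    simpa using this
  set l := (q ^ 2 - 1) / s with hldef
  have hsl : s * l = q ^ 2 - 1 := by
    apply Nat.mul_div_cancel'
    exact Dvd.dvd.trans ⟨m, hm⟩ ⟨q - 1, hq21⟩
  have hlm : l = m * (q - 1) := by
    have h1 : s * l = s * (m * (q - 1)) := by
      rw [hsl, ← mul_assoc, ← hm, hq21]
    exact Nat.eq_of_mul_eq_mul_left (by omega) h1
  have hmdiv : (q + 1) / s = m := by rw [hm]; exact Nat.mul_div_cancel_left m (by omega)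
  rw [hmdiv] at hi hj
  set P := (s + h) / 2 with hPdef
  set Q := (s - h + 1) / 2 with hQdef
  have hPQ : P + Q = s := by omega
  have hPs : P < s := by omega
  have hQ1 : 1 ≤ Q := by omega
  have hP2 : 2 ≤ P := by omega
  have hPm4 : 4 ≤ P * m := by
    have := Nat.mul_le_mul hP2 hm2
    omega
  have hi' : i + 3 ≤ P * m := by omega
  have hj' : j + 3 ≤ P * m := by omega
  -- the sum factorization
  set N := q * i + j + q + 1 with hNdef
  set x : F := ((g : F) ^ s) ^ N with hxdef
  have htot : (∑ k ∈ Finset.range h, ∑ ν ∈ Finset.range l,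
      ((g : F) ^ k * ((g : F) ^ s) ^ ν) ^ (q * i + j)
        * (v k * ((g : F) ^ s) ^ ν) ^ (q + 1))
      = (∑ k ∈ Finset.range h, ((g : F) ^ k) ^ (q * i + j) * u k)
        * (∑ ν ∈ Finset.range l, x ^ ν) := by
    rw [Finset.sum_mul]
    refine Finset.sum_congr rfl fun k hk => ?_
    rw [Finset.mul_sum]
    refine Finset.sum_congr rfl fun ν hν => ?_
    rw [← hv k (Finset.mem_range.mp hk), hxdef, hNdef]
    rw [mul_pow, mul_pow, ← pow_mul, ← pow_mul, ← pow_mul, ← pow_mul, ← pow_add]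
    ring_nf
  rw [htot]
  by_cases hdvd : l ∣ N
  · obtain ⟨μ, hμ⟩ := hdvd
    -- bounds for μ, in ℤ
    have hN' : q * i + j + q + 1 = l * μ := by rw [← hNdef]; exact hμ
    have e1 : (l : ℤ) * μ = q * i + j + q + 1 := by exact_mod_cast hN'.symm
    have e2 : (l : ℤ) = m * ((q : ℤ) - 1) := by
      rw [hlm]; push_cast [Nat.cast_sub (by omega : 1 ≤ q)]; ring
    have e3 : (s : ℤ) * m = q + 1 := by exact_mod_cast congrArg (Nat.cast : ℕ → ℤ) hm.symm
    have e4 : (i : ℤ) + 3 ≤ (P : ℤ) * m := by exact_mod_cast (Nat.cast_le.mpr hi' : ((i+3 : ℕ):ℤ) ≤ ((P*m : ℕ):ℤ))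
    have e5 : (j : ℤ) + 3 ≤ (P : ℤ) * m := by exact_mod_cast (Nat.cast_le.mpr hj' : ((j+3 : ℕ):ℤ) ≤ ((P*m : ℕ):ℤ))
    have e6 : (P : ℤ) + Q = s := by exact_mod_cast congrArg (Nat.cast : ℕ → ℤ) hPQ
    have e7 : (2 : ℤ) ≤ m := by exact_mod_cast hm2
    have e8 : (5 : ℤ) ≤ q := by exact_mod_cast hq5
    have e9 : (P : ℤ) < s := by exact_mod_cast hPs
    have eM : (m : ℤ) * ((q : ℤ) - 1) * μ = q * i + j + q + 1 := by
      linear_combination e1 - (μ : ℤ) * e2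
    obtain ⟨c, hc1, hc2⟩ : ∃ c : ℤ, (m : ℤ) * μ = i + 1 + c ∧ ((i : ℤ) + j + 2) = c * ((q : ℤ) - 1) :=
      ⟨(m : ℤ) * μ - i - 1, by ring, by linear_combination (μ : ℤ) * e2 - e1⟩
    have hcpos : 1 ≤ c := by
      by_contra hcon
      push_neg at hcon
      have : c * ((q : ℤ) - 1) ≤ 0 :=
        mul_nonpos_of_nonpos_of_nonneg (by linarith) (by linarith)
      linarith [hc2]
    have hub : (μ : ℤ) < P := by
      by_contra hcon
      push_neg at hcon
      have h1 : (P : ℤ) * (m * ((q : ℤ) - 1)) ≤ (μ : ℤ) * (m * ((q : ℤ) - 1)) :=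
        mul_le_mul_of_nonneg_right hcon (mul_nonneg (by linarith) (by linarith))
      have h2 : (q : ℤ) * (i + 3) ≤ (q : ℤ) * (P * m) :=
        mul_le_mul_of_nonneg_left e4 (by linarith)
      have h3 : ((P : ℤ) + 1) * m ≤ (s : ℤ) * m :=
        mul_le_mul_of_nonneg_right (by linarith) (by linarith)
      linarith [h1, h2, h3, eM, e5, e3, e7]
    have hlb : (Q : ℤ) + 1 ≤ μ := by
      by_contra hcon
      push_neg at hcon
      have h1 : (μ : ℤ) * m ≤ (Q : ℤ) * m := mul_le_mul_of_nonneg_right (by linarith) (by linarith)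
      have h2 : (1 : ℤ) * q ≤ c * q := mul_le_mul_of_nonneg_right hcpos (by linarith)
      have h3 : (P : ℤ) * m + Q * m = s * m := by linear_combination (m : ℤ) * e6
      linarith [hc1, hc2, e5, e3, h1, h2, h3]
    have hubn : μ ≤ P - 1 := by
      have : μ < P := by exact_mod_cast hub
      omega
    have hlbn : Q + 1 ≤ μ := by exact_mod_cast hlb
    have hA : ∑ k ∈ Finset.range h, ((g : F) ^ k) ^ (q * i + j) * u k = 0 := by
      rw [← humu μ hlbn hubn]
      refine Finset.sum_congr rfl fun k hk => ?_
      congr 1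
      have hexp : (k : ℤ) * ((μ : ℤ) * (l : ℤ) - q - 1) = ((k * (q * i + j) : ℕ) : ℤ) := by
        push_cast
        linear_combination (k : ℤ) * e1
      rw [hexp, zpow_natCast, Units.val_pow_eq_pow_val, pow_mul]
    rw [hA, zero_mul]
  · -- geometric sum vanishes
    have hxl : x ^ l = 1 := by
      rw [hxdef, ← pow_mul, ← pow_mul]
      have : s * (N * l) = (q ^ 2 - 1) * N := by rw [← hsl]; ring
      rw [this, pow_mul, ← Units.val_pow_eq_pow_val, ← hg, pow_orderOf_eq_one, Units.val_one, one_pow]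
    have hx1 : x ≠ 1 := by
      intro hx
      apply hdvd
      have hu1 : (g ^ (s * N) : Fˣ) = 1 := by
        ext
        rw [Units.val_pow_eq_pow_val, Units.val_one, pow_mul]
        exact hx
      have : orderOf g ∣ s * N := orderOf_dvd_of_pow_eq_one hu1
      rw [hg, ← hsl] at this
      exact (Nat.mul_dvd_mul_iff_left (by omega : 0 < s)).mp this
    rw [geom_sum_eq hx1, hxl, sub_self, zero_div, mul_zero]
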